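/- With the trajectory and greedy setup with unbound actions, suppose each action a_t ∈ ℝᵐ is a local maximum over all of ℝᵐ of the function Q_t(a) = r(x_t, a) + γ Ṽ(f(x_t, a)), and suppose the value-gradients G_t := ∇Ṽ(x_t) satisfy G_F = 0 and the costate recursion G_t = ∇_x r(x_t, a_t) + γ (D_x f(x_t, a_t))ᵀ G_{t+1} for 0 ≤ t < F. Then the action tuple (a₀, …, a_{F−1}) is a critical point of the total reward: the Fréchet derivative of the map (a₀,…,a_{F−1}) ↦ R (with x₀ fixed) is zero at (a₀, …, a_{F−1}). -/

import Mathlib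

open Matrix

/-- Gradient of a scalar function, as a vector of partial derivatives. -/
noncomputable def grad {k : ℕ} (g : (Fin k → ℝ) → ℝ) (x : Fin k → ℝ) : Fin k → ℝ :=
  fun i => fderiv ℝ g x (Pi.single i 1)

/-- Gradient of `r` in the state variable. -/
noncomputable def gradX {n m : ℕ} (r : (Fin n → ℝ) × (Fin m → ℝ) → ℝ)
    (x : Fin n → ℝ) (a : Fin m → ℝ) : Fin n → ℝ :=
  fun i => fderiv ℝ (fun y => r (y, a)) x (Pi.single i 1)

/-- Jacobian of `f` in the state variable (rows indexed by output components). -/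
noncomputable def jacX {n m : ℕ} (f : (Fin n → ℝ) × (Fin m → ℝ) → Fin n → ℝ)
    (x : Fin n → ℝ) (a : Fin m → ℝ) : Matrix (Fin n) (Fin n) ℝ :=
  Matrix.of fun j i => fderiv ℝ (fun y => f (y, a) j) x (Pi.single i 1)

/-- Extend a finite action tuple to all of `ℕ` (by `0` beyond `F`). -/
noncomputable def pad {F m : ℕ} (as : Fin F → Fin m → ℝ) : ℕ → Fin m → ℝ :=
  fun t => if h : t < F then as ⟨t, h⟩ else 0

/-- The trajectory generated from `x₀` by the actions `as`. -/
def traj {n m : ℕ} (f : (Fin n → ℝ) × (Fin m → ℝ) → Fin n → ℝ)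
    (x₀ : Fin n → ℝ) (as : ℕ → Fin m → ℝ) : ℕ → Fin n → ℝ
  | 0 => x₀
  | t + 1 => f (traj f x₀ as t, as t)

/-- The total (discounted) reward, as a function of the whole action tuple. -/
noncomputable def Rtot {n m : ℕ} (F : ℕ) (γ : ℝ)
    (f : (Fin n → ℝ) × (Fin m → ℝ) → Fin n → ℝ)
    (r : (Fin n → ℝ) × (Fin m → ℝ) → ℝ)
    (x₀ : Fin n → ℝ) (as : Fin F → Fin m → ℝ) : ℝ :=
  ∑ t ∈ Finset.range F, γ ^ t * r (traj f x₀ (pad as) t, pad as t)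

/-- A continuous linear functional on `Fin k → ℝ` applied to `v` equals the dot
product of its values on the basis with `v`. -/
lemma clm_dot {k : ℕ} (L : (Fin k → ℝ) →L[ℝ] ℝ) (v : Fin k → ℝ) :
    (fun i => L (Pi.single i 1)) ⬝ᵥ v = L v := by
  have hv : v = ∑ i, (v i) • (Pi.single i 1 : Fin k → ℝ) := by
    funext j
    simp [Finset.sum_apply, Pi.single_apply]
  conv_rhs => rw [hv]
  rw [map_sum]
  simp [dotProduct, mul_comm]

/-- The derivative maps of the trajectory, defined recursively. -/
noncomputable def Dmap {n m F : ℕ} (f : (Fin n → ℝ) × (Fin m → ℝ) → Fin n → ℝ)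
    (x : ℕ → Fin n → ℝ) (pa : ℕ → Fin m → ℝ)
    (P : ℕ → ((Fin F → Fin m → ℝ) →L[ℝ] (Fin m → ℝ))) :
    ℕ → ((Fin F → Fin m → ℝ) →L[ℝ] (Fin n → ℝ))
  | 0 => 0
  | t + 1 => (fderiv ℝ f (x t, pa t)).comp ((Dmap f x pa P t).prod (P t))

/-- unbound-actions case of Theorem 1: a greedy trajectory with
unbound actions whose value-gradients satisfy the costate recursion is a
critical point of the total reward. -/
theorem stmt7 {n m : ℕ} (F : ℕ) (hF : 1 ≤ F) (γ : ℝ)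
    (f : (Fin n → ℝ) × (Fin m → ℝ) → Fin n → ℝ)
    (r : (Fin n → ℝ) × (Fin m → ℝ) → ℝ)
    (hf : ContDiff ℝ 1 f) (hr : ContDiff ℝ 1 r)
    (V : (Fin n → ℝ) → ℝ) (hV : Differentiable ℝ V)
    (x₀ : Fin n → ℝ) (a : Fin F → Fin m → ℝ)
    (x : ℕ → Fin n → ℝ) (hxdef : x = traj f x₀ (pad a))
    (Q : ℕ → (Fin m → ℝ) → ℝ)
    (hQdef : ∀ t, Q t = fun b => r (x t, b) + γ * V (f (x t, b)))
    (hgreedy : ∀ t : Fin F, IsLocalMax (Q t) (a t))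
    (G : ℕ → Fin n → ℝ) (hGdef : ∀ t, G t = grad V (x t))
    (hGF : G F = 0)
    (hGrec : ∀ t < F, G t =
      gradX r (x t) (pad a t) + γ • (jacX f (x t) (pad a t))ᵀ.mulVec (G (t + 1))) :
    fderiv ℝ (Rtot F γ f r x₀) a = 0 := by
  have hfd : Differentiable ℝ f := hf.differentiable one_ne_zero
  have hrd : Differentiable ℝ r := hr.differentiable one_ne_zero
  -- the trajectory at the point `a`
  have hxE : ∀ t, traj f x₀ (pad a) t = x t := fun t => by rw [hxdef]
  -- projection continuous linear maps
  set P : ℕ → ((Fin F → Fin m → ℝ) →L[ℝ] (Fin m → ℝ)) :=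
    fun t => if h : t < F then ContinuousLinearMap.proj (⟨t, h⟩ : Fin F) else 0 with hP
  have hpadP : ∀ (t : ℕ) (as : Fin F → Fin m → ℝ), pad as t = P t as := by
    intro t as
    by_cases h : t < F <;> simp [pad, P, h]
  set D := Dmap f x (pad a) P with hD
  set Lr : ℕ → ((Fin n → ℝ) × (Fin m → ℝ) →L[ℝ] ℝ) :=
    fun t => fderiv ℝ r (x t, pad a t) with hLr
  set Lf : ℕ → ((Fin n → ℝ) × (Fin m → ℝ) →L[ℝ] (Fin n → ℝ)) :=
    fun t => fderiv ℝ f (x t, pad a t) with hLf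
  -- derivative of the trajectory
  have hXd : ∀ t : ℕ, HasFDerivAt (fun as => traj f x₀ (pad as) t) (D t) a := by
    intro t
    induction t with
    | zero => simpa [hD, Dmap, traj] using (hasFDerivAt_const (𝕜 := ℝ) x₀ a)
    | succ t ih =>
      have h1 : HasFDerivAt (fun as : Fin F → Fin m → ℝ =>
          ((traj f x₀ (pad as) t), P t as)) ((D t).prod (P t)) a :=
        ih.prodMk (P t).hasFDerivAt
      have h2 := (hfd (traj f x₀ (pad a) t, P t a)).hasFDerivAt.comp a h1
      rw [hxE t, ← hpadP t a] at h2
      have hfun : (f ∘ fun as : Fin F → Fin m → ℝ => (traj f x₀ (pad as) t, P t as)) =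
          fun as => traj f x₀ (pad as) (t + 1) := by
        funext as
        show f (traj f x₀ (pad as) t, P t as) = f (traj f x₀ (pad as) t, pad as t)
        rw [hpadP]
      rw [hfun] at h2
      exact h2
  -- derivative of each reward term
  have hterm : ∀ t : ℕ, HasFDerivAt
      (fun as => γ ^ t * r (traj f x₀ (pad as) t, pad as t))
      (γ ^ t • (Lr t).comp ((D t).prod (P t))) a := by
    intro t
    have h1 : HasFDerivAt (fun as : Fin F → Fin m → ℝ =>
        ((traj f x₀ (pad as) t), P t as)) ((D t).prod (P t)) a :=
      (hXd t).prodMk (P t).hasFDerivAt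
    have h2 := (hrd (traj f x₀ (pad a) t, P t a)).hasFDerivAt.comp a h1
    rw [hxE t, ← hpadP t a] at h2
    have h3 := h2.const_mul (γ ^ t)
    have hfun : (fun as : Fin F → Fin m → ℝ =>
        γ ^ t * (r ∘ fun as : Fin F → Fin m → ℝ => (traj f x₀ (pad as) t, P t as)) as) =
        fun as => γ ^ t * r (traj f x₀ (pad as) t, pad as t) := by
      funext as
      simp only [Function.comp_apply, ← hpadP]
    rw [hfun] at h3
    exact h3
  -- derivative of the total reward
  have hR : HasFDerivAt (Rtot F γ f r x₀)
      (∑ t ∈ Finset.range F, γ ^ t • (Lr t).comp ((D t).prod (P t))) a :=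
    HasFDerivAt.fun_sum (fun t _ => hterm t)
  rw [hR.fderiv]
  -- dot product formulations of the hypotheses
  have hGdot : ∀ (t : ℕ) (w : Fin n → ℝ), G t ⬝ᵥ w = fderiv ℝ V (x t) w := by
    intro t w
    rw [hGdef t]
    exact clm_dot (fderiv ℝ V (x t)) w
  have hrX : ∀ t : ℕ, fderiv ℝ (fun y => r (y, pad a t)) (x t) =
      (Lr t).comp (ContinuousLinearMap.inl ℝ (Fin n → ℝ) (Fin m → ℝ)) := by
    intro t
    exact ((hrd (x t, pad a t)).hasFDerivAt.comp (x t)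
      (hasFDerivAt_prodMk_left (x t) (pad a t))).fderiv
  have hfX : ∀ t : ℕ, fderiv ℝ (fun y => f (y, pad a t)) (x t) =
      (Lf t).comp (ContinuousLinearMap.inl ℝ (Fin n → ℝ) (Fin m → ℝ)) := by
    intro t
    exact ((hfd (x t, pad a t)).hasFDerivAt.comp (x t)
      (hasFDerivAt_prodMk_left (x t) (pad a t))).fderiv
  have hgradX : ∀ (t : ℕ) (w : Fin n → ℝ),
      gradX r (x t) (pad a t) ⬝ᵥ w = Lr t (w, 0) := by
    intro t w
    have : gradX r (x t) (pad a t) = fun i =>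
        ((Lr t).comp (ContinuousLinearMap.inl ℝ (Fin n → ℝ) (Fin m → ℝ))) (Pi.single i 1) := by
      funext i
      rw [gradX, hrX t]
    rw [this, clm_dot]
    rfl
  have hjac : ∀ (t : ℕ) (g w : Fin n → ℝ),
      ((jacX f (x t) (pad a t))ᵀ.mulVec g) ⬝ᵥ w = g ⬝ᵥ (Lf t (w, 0)) := by
    intro t g w
    rw [Matrix.mulVec_transpose, ← Matrix.dotProduct_mulVec]
    congr 1
    funext j
    have hcomp : fderiv ℝ (fun y => f (y, pad a t) j) (x t) =
        (ContinuousLinearMap.proj j).comp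
          ((Lf t).comp (ContinuousLinearMap.inl ℝ (Fin n → ℝ) (Fin m → ℝ))) := by
      have h1 : HasFDerivAt (fun y : Fin n → ℝ => f (y, pad a t))
          ((Lf t).comp (ContinuousLinearMap.inl ℝ (Fin n → ℝ) (Fin m → ℝ))) (x t) :=
        (hfd (x t, pad a t)).hasFDerivAt.comp (x t)
          (hasFDerivAt_prodMk_left (x t) (pad a t))
      exact ((ContinuousLinearMap.proj j).hasFDerivAt.comp (x t) h1).fderiv
    have : (jacX f (x t) (pad a t)).mulVec w j = Lf t (w, 0) j := by
      have : (fun i => ((ContinuousLinearMap.proj (R := ℝ)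
          (φ := fun _ : Fin n => ℝ) j).comp
          ((Lf t).comp (ContinuousLinearMap.inl ℝ (Fin n → ℝ) (Fin m → ℝ))))
            (Pi.single i 1)) ⬝ᵥ w =
          ((ContinuousLinearMap.proj (R := ℝ) (φ := fun _ : Fin n => ℝ) j).comp
          ((Lf t).comp (ContinuousLinearMap.inl ℝ (Fin n → ℝ) (Fin m → ℝ)))) w :=
        clm_dot _ w
      simp only [ContinuousLinearMap.comp_apply, ContinuousLinearMap.inl_apply,
        ContinuousLinearMap.proj_apply] at this
      rw [Matrix.mulVec]
      refine Eq.trans ?_ this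
      congr 1
      funext i
      rw [jacX, Matrix.of_apply, hcomp]
      simp [ContinuousLinearMap.comp_apply]
    exact this
  -- costate recursion in linear-map form
  have hcost : ∀ t < F, ∀ w : Fin n → ℝ,
      G t ⬝ᵥ w = Lr t (w, 0) + γ * (G (t + 1) ⬝ᵥ Lf t (w, 0)) := by
    intro t ht w
    rw [hGrec t ht, add_dotProduct, smul_dotProduct, hgradX, hjac]
    simp [smul_eq_mul]
  -- greedy condition in linear-map form
  have hgreedy' : ∀ t < F, ∀ u : Fin m → ℝ,
      Lr t (0, u) + γ * (G (t + 1) ⬝ᵥ Lf t (0, u)) = 0 := by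
    intro t ht u
    have hpa : pad a t = a ⟨t, ht⟩ := by simp [pad, ht]
    have hx1 : x (t + 1) = f (x t, pad a t) := by
      rw [hxdef]
      show f (traj f x₀ (pad a) t, pad a t) = f (traj f x₀ (pad a) t, pad a t)
      rfl
    have h1 : HasFDerivAt (fun b => r (x t, b))
        ((Lr t).comp (ContinuousLinearMap.inr ℝ (Fin n → ℝ) (Fin m → ℝ))) (a ⟨t, ht⟩) := by
      rw [← hpa]
      exact (hrd (x t, pad a t)).hasFDerivAt.comp (pad a t)
        (hasFDerivAt_prodMk_right (x t) (pad a t))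
    have h2 : HasFDerivAt (fun b => V (f (x t, b)))
        ((fderiv ℝ V (x (t + 1))).comp
          ((Lf t).comp (ContinuousLinearMap.inr ℝ (Fin n → ℝ) (Fin m → ℝ)))) (a ⟨t, ht⟩) := by
      rw [← hpa]
      have hin : HasFDerivAt (fun b => f (x t, b))
          ((Lf t).comp (ContinuousLinearMap.inr ℝ (Fin n → ℝ) (Fin m → ℝ))) (pad a t) :=
        (hfd (x t, pad a t)).hasFDerivAt.comp (pad a t)
          (hasFDerivAt_prodMk_right (x t) (pad a t))
      have := (hV (f (x t, pad a t))).hasFDerivAt.comp (pad a t) hin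
      rwa [← hx1] at this
    have hQd : HasFDerivAt (Q t)
        ((Lr t).comp (ContinuousLinearMap.inr ℝ (Fin n → ℝ) (Fin m → ℝ)) +
          γ • (fderiv ℝ V (x (t + 1))).comp
            ((Lf t).comp (ContinuousLinearMap.inr ℝ (Fin n → ℝ) (Fin m → ℝ)))) (a ⟨t, ht⟩) := by
      rw [hQdef t]
      exact h1.add (h2.const_mul γ)
    have hmax : IsLocalMax (Q t) (a ⟨t, ht⟩) := hgreedy ⟨t, ht⟩
    have h0 := hmax.hasFDerivAt_eq_zero hQd
    have := congrArg (fun L => L u) h0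
    simp only [ContinuousLinearMap.add_apply, ContinuousLinearMap.smul_apply,
      ContinuousLinearMap.comp_apply, ContinuousLinearMap.inr_apply,
      ContinuousLinearMap.zero_apply, smul_eq_mul] at this
    rw [hGdot (t + 1)]
    exact this
  -- evaluate the derivative on an arbitrary direction and telescope
  ext v
  simp only [ContinuousLinearMap.coe_sum', Finset.sum_apply, ContinuousLinearMap.smul_apply,
    ContinuousLinearMap.comp_apply, ContinuousLinearMap.prod_apply,
    ContinuousLinearMap.zero_apply, smul_eq_mul]
  have hd0 : D 0 v = 0 := rfl
  have hdrec : ∀ t : ℕ, D (t + 1) v = Lf t (D t v, P t v) := fun t => rfl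
  have key : ∀ t ∈ Finset.range F,
      γ ^ t * (Lr t) (D t v, P t v) =
      (fun s => γ ^ s * (G s ⬝ᵥ D s v)) t - (fun s => γ ^ s * (G s ⬝ᵥ D s v)) (t + 1) := by
    intro t htm
    have ht : t < F := Finset.mem_range.mp htm
    have hsplitr : Lr t (D t v, P t v) = Lr t (D t v, 0) + Lr t (0, P t v) := by
      rw [← map_add]
      congr 1
      simp
    have hsplitf : Lf t (D t v, P t v) = Lf t (D t v, 0) + Lf t (0, P t v) := by
      rw [← map_add]
      congr 1
      simp
    have h1 := hcost t ht (D t v)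
    have h2 := hgreedy' t ht (P t v)
    have h3 : G (t + 1) ⬝ᵥ D (t + 1) v =
        G (t + 1) ⬝ᵥ Lf t (D t v, 0) + G (t + 1) ⬝ᵥ Lf t (0, P t v) := by
      rw [hdrec t, hsplitf, dotProduct_add]
    show γ ^ t * (Lr t) (D t v, P t v) =
      γ ^ t * (G t ⬝ᵥ D t v) - γ ^ (t + 1) * (G (t + 1) ⬝ᵥ D (t + 1) v)
    rw [hsplitr]
    linear_combination (-(γ ^ t)) * h1 + (γ ^ t) * h2 + (γ ^ (t + 1)) * h3
  rw [Finset.sum_congr rfl key, Finset.sum_range_sub']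
  simp [hd0, hGF]
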